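/- arXiv:2106.05396 — 5 statements merged into one kernel-verified Lean document; each statement's English description precedes it below -/
import Mathlib

section
/- There exists a real n×(n−p) matrix W satisfying: (i) WᵀW = I_{n−p}, (ii) FᵀW = 0 (the p×(n−p) zero matrix), and (iii) K̄ = W(WᵀKW)⁻¹Wᵀ, where WᵀKW is positive definite, hence invertible. -/
open Matrix

/-- The matrix `K̄ = K⁻¹ − K⁻¹F(FᵀK⁻¹F)⁻¹FᵀK⁻¹`. -/
noncomputable def Kbar {n p : ℕ} (F : Matrix (Fin n) (Fin p) ℝ)
    (K : Matrix (Fin n) (Fin n) ℝ) : Matrix (Fin n) (Fin n) ℝ :=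
  K⁻¹ - K⁻¹ * F * (Fᵀ * K⁻¹ * F)⁻¹ * Fᵀ * K⁻¹

/-- If `A` is positive definite and `B` has injective `mulVec`, then `Bᵀ A B` is
positive definite. -/
lemma posDef_transpose_mul_mul {m n : ℕ} {A : Matrix (Fin n) (Fin n) ℝ} (hA : A.PosDef)
    (B : Matrix (Fin n) (Fin m) ℝ) (hB : Function.Injective B.mulVec) :
    (Bᵀ * A * B).PosDef := by
  constructor
  · have h := Matrix.isHermitian_conjTranspose_mul_mul B hA.1
    simpa using h
  · have h := (Matrix.PosDef.conjTranspose_mul_mul_same hA hB).2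
    simpa using h

/-- Lemma 2 (De Oliveira): existence of `W` with `WᵀW = I`, `FᵀW = 0` and
`K̄ = W(WᵀKW)⁻¹Wᵀ`, where `WᵀKW` is positive definite. -/
theorem stmt1 (n p : ℕ) (hp : 0 < p) (hpn : p < n)
    (F : Matrix (Fin n) (Fin p) ℝ) (hF : F.rank = p)
    (K : Matrix (Fin n) (Fin n) ℝ) (hK : K.PosDef) :
    ∃ W : Matrix (Fin n) (Fin (n - p)) ℝ,
      Wᵀ * W = 1 ∧ Fᵀ * W = 0 ∧ (Wᵀ * K * W).PosDef ∧
      Kbar F K = W * (Wᵀ * K * W)⁻¹ * Wᵀ := by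
  classical
  -- F has injective mulVec
  have hFinj : Function.Injective F.mulVecLin := by
    rw [← LinearMap.ker_eq_bot]
    have h := F.mulVecLin.finrank_range_add_finrank_ker
    rw [← Matrix.rank, hF] at h
    simp only [Module.finrank_pi, Fintype.card_fin] at h
    exact Submodule.finrank_eq_zero.mp (by omega)
  -- construct W
  set e := (WithLp.linearEquiv 2 ℝ (Fin n → ℝ)).symm with he
  set U : Submodule ℝ (EuclideanSpace ℝ (Fin n)) :=
    (Submodule.span ℝ (Set.range Fᵀ)).map e.toLinearMap with hU
  have hUrank : Module.finrank ℝ U = p := by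
    rw [hU]; rw [LinearEquiv.finrank_map_eq e]; exact (Matrix.rank_eq_finrank_span_cols F).symm.trans hF
  have horth : Module.finrank ℝ (Uᗮ) = n - p := by
    have h := Submodule.finrank_add_finrank_orthogonal U
    rw [hUrank, finrank_euclideanSpace_fin] at h
    omega
  set b := (stdOrthonormalBasis ℝ (↥Uᗮ)).reindex (finCongr horth) with hb
  set W : Matrix (Fin n) (Fin (n - p)) ℝ :=
    fun i j => ((b j : EuclideanSpace ℝ (Fin n)) i) with hW
  -- orthonormality of the columns
  have hWW : Wᵀ * W = 1 := by
    ext j k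
    have hon := b.orthonormal
    rw [orthonormal_iff_ite] at hon
    have h := hon j k
    rw [Submodule.coe_inner, PiLp.inner_apply] at h
    simp only [RCLike.inner_apply, conj_trivial] at h
    simp only [Matrix.mul_apply, Matrix.transpose_apply, Matrix.one_apply, hW]
    exact (Finset.sum_congr rfl fun x _ => mul_comm _ _).trans h
  -- orthogonality to columns of F
  have hFW : Fᵀ * W = 0 := by
    ext a j
    have hmem : (e (Fᵀ a) : EuclideanSpace ℝ (Fin n)) ∈ U :=
      Submodule.mem_map_of_mem (Submodule.subset_span ⟨a, rfl⟩)
    have horthmem := (b j).2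
    rw [Submodule.mem_orthogonal] at horthmem
    have h := horthmem _ hmem
    rw [PiLp.inner_apply] at h
    simp only [RCLike.inner_apply, conj_trivial] at h
    simp only [Matrix.mul_apply, Matrix.transpose_apply, Matrix.zero_apply, hW]
    convert h using 1
    exact Finset.sum_congr (s₁ := Finset.univ) rfl fun x _ => mul_comm (Fᵀ a x) (W x j)
  -- W has injective mulVec
  have hWinj : Function.Injective W.mulVec := by
    intro x y hxy
    have : Wᵀ *ᵥ (W *ᵥ x) = Wᵀ *ᵥ (W *ᵥ y) := by rw [hxy]
    simpa [Matrix.mulVec_mulVec, hWW] using this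
  -- positive definiteness
  have hWKW : (Wᵀ * K * W).PosDef := posDef_transpose_mul_mul hK W hWinj
  have hFKF : (Fᵀ * K⁻¹ * F).PosDef := by
    refine posDef_transpose_mul_mul hK.inv F ?_
    intro x y hxy
    exact hFinj (by simpa [Matrix.mulVecLin_apply] using hxy)
  -- invertibility facts
  have hKd : IsUnit K.det := (Matrix.isUnit_iff_isUnit_det K).mp hK.isUnit
  have hGd : IsUnit (Fᵀ * K⁻¹ * F).det := (Matrix.isUnit_iff_isUnit_det _).mp hFKF.isUnit
  have hHd : IsUnit (Wᵀ * K * W).det := (Matrix.isUnit_iff_isUnit_det _).mp hWKW.isUnit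
  have h1 : (Fᵀ * K⁻¹ * F)⁻¹ * (Fᵀ * K⁻¹ * F) = 1 := Matrix.nonsing_inv_mul _ hGd
  have h2 : K⁻¹ * K = 1 := Matrix.nonsing_inv_mul _ hKd
  have h3 : (Wᵀ * K * W)⁻¹ * (Wᵀ * K * W) = 1 := Matrix.nonsing_inv_mul _ hHd
  -- matrix identities for Kbar
  have hKbarF : Kbar F K * F = 0 := by
    have e1 : Kbar F K * F
        = K⁻¹ * F - K⁻¹ * (F * ((Fᵀ * K⁻¹ * F)⁻¹ * (Fᵀ * (K⁻¹ * F)))) := by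
      unfold Kbar; simp only [Matrix.sub_mul, Matrix.mul_assoc]
    rw [e1, ← Matrix.mul_assoc Fᵀ K⁻¹ F, h1, Matrix.mul_one]
    exact sub_self _
  have hKbarKW : Kbar F K * (K * W) = W := by
    have e1 : Kbar F K * (K * W)
        = K⁻¹ * (K * W) - K⁻¹ * (F * ((Fᵀ * K⁻¹ * F)⁻¹ * (Fᵀ * (K⁻¹ * (K * W))))) := by
      unfold Kbar; simp only [Matrix.sub_mul, Matrix.mul_assoc]
    have e2 : K⁻¹ * (K * W) = W := by rw [← Matrix.mul_assoc, h2, Matrix.one_mul]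
    rw [e1, e2, hFW]
    simp
  -- matrix identities for R := W (WᵀKW)⁻¹ Wᵀ
  have hWtF : Wᵀ * F = 0 := by
    have := congrArg Matrix.transpose hFW
    simpa using this
  have hRF : (W * (Wᵀ * K * W)⁻¹ * Wᵀ) * F = 0 := by
    rw [Matrix.mul_assoc (W * (Wᵀ * K * W)⁻¹) Wᵀ F, hWtF, Matrix.mul_zero]
  have hRKW : (W * (Wᵀ * K * W)⁻¹ * Wᵀ) * (K * W) = W := by
    have e1 : (W * (Wᵀ * K * W)⁻¹ * Wᵀ) * (K * W)
        = W * ((Wᵀ * K * W)⁻¹ * (Wᵀ * (K * W))) := by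
      simp only [Matrix.mul_assoc]
    rw [e1, ← Matrix.mul_assoc Wᵀ K W, h3, Matrix.mul_one]
  -- the linear map (a, b) ↦ F a + (KW) b
  set T : ((Fin p → ℝ) × (Fin (n - p) → ℝ)) →ₗ[ℝ] (Fin n → ℝ) :=
    F.mulVecLin.comp (LinearMap.fst ℝ _ _)
      + (K * W).mulVecLin.comp (LinearMap.snd ℝ _ _) with hT
  have hTapp : ∀ a b, T (a, b) = F *ᵥ a + (K * W) *ᵥ b := by
    intro a b; simp [hT, Matrix.mulVecLin_apply]
  have hTinj : Function.Injective T := by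
    rw [← LinearMap.ker_eq_bot, LinearMap.ker_eq_bot']
    rintro ⟨a, bb⟩ hab
    rw [hTapp] at hab
    have h0 : Kbar F K *ᵥ (F *ᵥ a + (K * W) *ᵥ bb) = 0 := by rw [hab, Matrix.mulVec_zero]
    rw [Matrix.mulVec_add, Matrix.mulVec_mulVec, Matrix.mulVec_mulVec, hKbarF, hKbarKW,
      Matrix.zero_mulVec, zero_add] at h0
    have hb0 : bb = 0 := hWinj (by simpa using h0)
    rw [hb0] at hab
    simp only [Matrix.mulVec_zero, add_zero] at hab
    have ha0 : a = 0 := hFinj (by simpa [Matrix.mulVecLin_apply] using hab)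
    simp [ha0, hb0]
  have hTsurj : Function.Surjective T := by
    rw [← LinearMap.injective_iff_surjective_of_finrank_eq_finrank ?_]
    · exact hTinj
    · simp only [Module.finrank_prod, Module.finrank_pi, Fintype.card_fin]
      omega
  -- conclude
  refine ⟨W, hWW, hFW, hWKW, ?_⟩
  apply Matrix.toLin'.injective
  apply LinearMap.ext
  intro x
  obtain ⟨⟨a, bb⟩, rfl⟩ := hTsurj x
  rw [hTapp, Matrix.toLin'_apply, Matrix.toLin'_apply]
  rw [Matrix.mulVec_add, Matrix.mulVec_add, Matrix.mulVec_mulVec, Matrix.mulVec_mulVec,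
    Matrix.mulVec_mulVec, Matrix.mulVec_mulVec, hKbarF, hKbarKW, hRF, hRKW]
end

section
/- Under Hypothesis H2, every diagonal entry of K̄ is strictly positive: K̄ᵢᵢ > 0 for all i = 1,…,n. -/
open Matrix

/-- Lemma 3: under Hypothesis H2 (no standard basis vector lies in `Im F`),
all diagonal entries of `K̄` are strictly positive. -/
theorem stmt3 (n p : ℕ) (hp : 0 < p) (hpn : p < n)
    (F : Matrix (Fin n) (Fin p) ℝ) (hF : F.rank = p)
    (hH2 : ∀ i : Fin n, Pi.single i (1 : ℝ) ∉ LinearMap.range (Matrix.mulVecLin F))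
    (K : Matrix (Fin n) (Fin n) ℝ) (hK : K.PosDef) :
    ∀ i : Fin n, 0 < Kbar F K i i := by
  set M := K⁻¹ with hMdef
  have hM : M.PosDef := hK.inv
  have hMpos : ∀ v : Fin n → ℝ, v ≠ 0 → 0 < v ⬝ᵥ (M *ᵥ v) := by
    intro v hv
    have := hM.dotProduct_mulVec_pos hv
    rwa [show star v = v from funext fun j => star_trivial _] at this
  have hMsym : Mᵀ = M := by
    have := hM.isHermitian.eq
    simpa [Matrix.conjTranspose_eq_transpose_of_trivial] using this
  have hFinj : Function.Injective F.mulVecLin := by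
    rw [← LinearMap.ker_eq_bot]
    rw [Matrix.rank] at hF
    have h1 := LinearMap.finrank_range_add_finrank_ker F.mulVecLin
    rw [hF] at h1
    simp only [Module.finrank_pi, Fintype.card_fin] at h1
    have : Module.finrank ℝ (LinearMap.ker F.mulVecLin) = 0 := by omega
    exact Submodule.finrank_eq_zero.mp this
  set A := Fᵀ * M * F with hAdef
  have hA : A.PosDef := by
    refine Matrix.PosDef.of_dotProduct_mulVec_pos ?_ ?_
    · show Aᴴ = A
      have : Aᴴ = Aᵀ := by ext i j; simp [Matrix.conjTranspose, Matrix.transpose]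
      rw [this, hAdef, Matrix.transpose_mul, Matrix.transpose_mul, Matrix.transpose_transpose,
        hMsym, Matrix.mul_assoc]
    · intro x hx
      have hFx : F *ᵥ x ≠ 0 := fun h => hx (hFinj (by simpa [Matrix.mulVecLin] using h))
      have hpos := hMpos (F *ᵥ x) hFx
      have key : x ⬝ᵥ (A *ᵥ x) = (F *ᵥ x) ⬝ᵥ (M *ᵥ (F *ᵥ x)) := by
        rw [hAdef, ← Matrix.mulVec_mulVec, ← Matrix.mulVec_mulVec,
          Matrix.dotProduct_mulVec, Matrix.vecMul_transpose]
      rw [show star x = x from funext fun j => star_trivial _]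
      rw [key]
      exact hpos
  have hAunit : IsUnit A.det := hA.isUnit.map Matrix.detMonoidHom
  have hAinv : A⁻¹ * A = 1 := Matrix.nonsing_inv_mul A hAunit
  set N : Matrix (Fin n) (Fin n) ℝ := 1 - F * A⁻¹ * Fᵀ * M with hNdef
  have hAinvSym : (A⁻¹)ᵀ = A⁻¹ := by
    rw [Matrix.transpose_nonsing_inv]
    congr 1
    have h1 : Aᴴ = Aᵀ := by ext i j; simp [Matrix.conjTranspose, Matrix.transpose]
    rw [← h1, hA.isHermitian.eq]
  have hfact : Kbar F K = Nᵀ * M * N := by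
    have hNT : Nᵀ = 1 - M * (F * (A⁻¹ * Fᵀ)) := by
      rw [hNdef]
      simp only [Matrix.transpose_sub, Matrix.transpose_one, Matrix.transpose_mul,
        Matrix.transpose_transpose, hMsym, hAinvSym, Matrix.mul_assoc]
    rw [hNT, hNdef, Kbar, ← hMdef, ← hAdef]
    have key : M * (F * (A⁻¹ * (Fᵀ * (M * (F * (A⁻¹ * (Fᵀ * M)))))))
        = M * (F * (A⁻¹ * (Fᵀ * M))) := by
      have h2 : Fᵀ * (M * (F * (A⁻¹ * (Fᵀ * M)))) = A * (A⁻¹ * (Fᵀ * M)) := by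
        simp only [hAdef, Matrix.mul_assoc]
      rw [h2, show A⁻¹ * (A * (A⁻¹ * (Fᵀ * M))) = (A⁻¹ * A) * (A⁻¹ * (Fᵀ * M)) by
        simp only [Matrix.mul_assoc], hAinv, Matrix.one_mul]
    simp only [Matrix.mul_sub, Matrix.sub_mul, Matrix.one_mul, Matrix.mul_one,
      Matrix.mul_assoc, key]
    abel
  intro i
  set x : Fin n → ℝ := Pi.single i 1 with hxdef
  have hdiag : Kbar F K i i = x ⬝ᵥ (Kbar F K *ᵥ x) := by
    simp [hxdef, Matrix.mulVec_single, single_dotProduct]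
  rw [hdiag, hfact]
  have hmv : (Nᵀ * M * N) *ᵥ x = Nᵀ *ᵥ (M *ᵥ (N *ᵥ x)) := by
    simp only [Matrix.mulVec_mulVec, Matrix.mul_assoc]
  rw [hmv, Matrix.dotProduct_mulVec, Matrix.vecMul_transpose]
  have hNx : N *ᵥ x ≠ 0 := by
    intro h
    apply hH2 i
    have hz : x - (F * A⁻¹ * Fᵀ * M) *ᵥ x = 0 := by
      rw [hNdef] at h
      simpa [Matrix.sub_mulVec] using h
    have heq : x = (F * A⁻¹ * Fᵀ * M) *ᵥ x := by
      have := sub_eq_zero.mp hz; exact this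
    exact ⟨(A⁻¹ * Fᵀ * M) *ᵥ x, by
      rw [Matrix.mulVecLin_apply, Matrix.mulVec_mulVec,
        show F * (A⁻¹ * Fᵀ * M) = F * A⁻¹ * Fᵀ * M by simp only [Matrix.mul_assoc]]
      exact heq.symm⟩
  exact hMpos (N *ᵥ x) hNx
end

section
/- Fix y ∈ ℝⁿ, a real symmetric positive definite n×n matrix R, and σ_ε² ≥ 0, and for σ² > 0 let K̄(σ²) be the matrix K̄ associated with K(σ²) = σ²R + σ_ε²Iₙ. Under Hypothesis H2, for every i = 1,…,n the standardized Leave-One-Out residual (K̄(σ²)y)ᵢ/√(K̄(σ²)ᵢᵢ) tends to 0 as σ² → +∞. -/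
open Matrix

open Filter Topology

variable {n p : ℕ}

lemma mulVecLin_inj {F : Matrix (Fin n) (Fin p) ℝ} (hF : F.rank = p) :
    Function.Injective F.mulVecLin := by
  rw [← LinearMap.ker_eq_bot]
  have h := F.mulVecLin.finrank_range_add_finrank_ker
  rw [Matrix.rank] at hF
  simp only [Module.finrank_pi, Fintype.card_fin] at h ⊢
  rw [hF] at h
  have : Module.finrank ℝ (LinearMap.ker F.mulVecLin) = 0 := by omega
  exact Submodule.finrank_eq_zero.mp this

lemma FAF_posDef {F : Matrix (Fin n) (Fin p) ℝ} (hF : Function.Injective F.mulVecLin)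
    {A : Matrix (Fin n) (Fin n) ℝ} (hA : A.PosDef) : (Fᵀ * A * F).PosDef := by
  refine Matrix.PosDef.of_dotProduct_mulVec_pos ?_ ?_
  · have hAh : Aᵀ = A := by
      simpa [Matrix.conjTranspose_eq_transpose_of_trivial] using hA.isHermitian.eq
    simp [Matrix.IsHermitian, conjTranspose_eq_transpose_of_trivial, transpose_mul, hAh,
      Matrix.mul_assoc]
  · intro x hx
    have hFx : F *ᵥ x ≠ 0 := by
      intro h
      apply hx
      have := hF (a₁ := x) (a₂ := 0) (by simpa using h)
      simpa using this
    have := hA.dotProduct_mulVec_pos hFx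
    rw [star_trivial] at this ⊢
    rwa [← Matrix.mulVec_mulVec, ← Matrix.mulVec_mulVec, Matrix.dotProduct_mulVec,
      Matrix.vecMul_transpose]


lemma smul_matrix_inv {c : ℝ} (hc : c ≠ 0) {m : ℕ} {M : Matrix (Fin m) (Fin m) ℝ}
    (hM : IsUnit M) : (c • M)⁻¹ = c⁻¹ • M⁻¹ := by
  apply Matrix.inv_eq_right_inv
  rw [smul_mul_smul_comm, mul_inv_cancel₀ hc, Matrix.mul_nonsing_inv _ (Matrix.isUnit_iff_isUnit_det _ |>.mp hM), one_smul]

lemma Kbar_smul {F : Matrix (Fin n) (Fin p) ℝ} (hF : Function.Injective F.mulVecLin)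
    {K : Matrix (Fin n) (Fin n) ℝ} (hK : K.PosDef) {c : ℝ} (hc : c ≠ 0) :
    Kbar F (c • K) = c⁻¹ • Kbar F K := by
  have hB : (Fᵀ * K⁻¹ * F).PosDef := FAF_posDef hF hK.inv
  have h1 : (c • K)⁻¹ = c⁻¹ • K⁻¹ := smul_matrix_inv hc hK.isUnit
  have h2 : Fᵀ * (c⁻¹ • K⁻¹) * F = c⁻¹ • (Fᵀ * K⁻¹ * F) := by
    simp [Matrix.mul_smul, Matrix.smul_mul]
  have h3 : (c⁻¹ • (Fᵀ * K⁻¹ * F))⁻¹ = c • (Fᵀ * K⁻¹ * F)⁻¹ := by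
    rw [smul_matrix_inv (inv_ne_zero hc) hB.isUnit, inv_inv]
  rw [Kbar, Kbar, h1, h2, h3]
  simp only [Matrix.smul_mul, Matrix.mul_smul, smul_smul, smul_sub]
  congr 2
  field_simp

lemma Kbar_diag_pos {F : Matrix (Fin n) (Fin p) ℝ} (hF : Function.Injective F.mulVecLin)
    {K : Matrix (Fin n) (Fin n) ℝ} (hK : K.PosDef) {i : Fin n}
    (h2 : Pi.single i (1:ℝ) ∉ LinearMap.range F.mulVecLin) :
    0 < Kbar F K i i := by
  have hA := hK.inv
  have hB : (Fᵀ * K⁻¹ * F).PosDef := FAF_posDef hF hA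
  set A := K⁻¹ with hAdef
  set Bi := (Fᵀ * A * F)⁻¹ with hBidef
  have hAt : Aᵀ = A := by
    simpa [Matrix.conjTranspose_eq_transpose_of_trivial] using hA.isHermitian.eq
  have hBit : Biᵀ = Bi := by
    simpa [Matrix.conjTranspose_eq_transpose_of_trivial] using hB.inv.isHermitian.eq
  set C : Matrix (Fin n) (Fin n) ℝ := 1 - F * Bi * Fᵀ * A with hC
  have hCt : Cᵀ = 1 - A * F * Bi * Fᵀ := by
    simp [hC, transpose_sub, transpose_mul, hAt, hBit, Matrix.mul_assoc]
  have hBB : Bi * (Fᵀ * A * F) = 1 :=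
    Matrix.nonsing_inv_mul _ ((Matrix.isUnit_iff_isUnit_det _).mp hB.isUnit)
  have hcanc : ∀ Z : Matrix (Fin p) (Fin n) ℝ, Bi * (Fᵀ * (A * (F * Z))) = Z := by
    intro Z
    calc Bi * (Fᵀ * (A * (F * Z))) = (Bi * (Fᵀ * A * F)) * Z := by
          simp only [Matrix.mul_assoc]
      _ = Z := by rw [hBB, Matrix.one_mul]
  have hfact : Kbar F K = Cᵀ * (A * C) := by
    have hBi' : (Fᵀ * (K⁻¹ * F))⁻¹ = Bi := by rw [hBidef, hAdef, Matrix.mul_assoc]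
    rw [hCt, hC, Kbar]
    simp only [Matrix.mul_sub, Matrix.sub_mul, Matrix.mul_one, Matrix.one_mul, Matrix.mul_assoc,
      hcanc, hBi']
    abel
  set w := C *ᵥ Pi.single i 1 with hw
  have hwne : w ≠ 0 := by
    intro h
    apply h2
    refine ⟨(Bi * (Fᵀ * A)) *ᵥ Pi.single i 1, ?_⟩
    have h' : Pi.single i 1 - (F * (Bi * (Fᵀ * A))) *ᵥ Pi.single i 1 = 0 := by
      have hx : C *ᵥ Pi.single i 1 = 0 := h
      rwa [hC, Matrix.sub_mulVec, Matrix.one_mulVec,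
        show F * Bi * Fᵀ * A = F * (Bi * (Fᵀ * A)) by simp [Matrix.mul_assoc]] at hx
    have hsingle := sub_eq_zero.mp h'
    rw [Matrix.mulVecLin_apply, Matrix.mulVec_mulVec]
    exact hsingle.symm
  have hpos := hA.dotProduct_mulVec_pos hwne
  rw [star_trivial] at hpos
  have hentry : Kbar F K i i = w ⬝ᵥ A *ᵥ w := by
    rw [hfact]
    have h1 : (Cᵀ * (A * C)) i i
        = Pi.single i 1 ⬝ᵥ ((Cᵀ * (A * C)) *ᵥ Pi.single i 1) := by
      simp [Matrix.mulVec_single, single_dotProduct]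
    rw [h1, ← Matrix.mulVec_mulVec, ← Matrix.mulVec_mulVec, Matrix.dotProduct_mulVec,
      Matrix.vecMul_transpose]
  rw [hentry]; exact hpos

lemma ContinuousAt.matMul {X : Type*} [TopologicalSpace X] {l m k : ℕ}
    {A : X → Matrix (Fin l) (Fin m) ℝ} {B : X → Matrix (Fin m) (Fin k) ℝ} {x : X}
    (hA : ContinuousAt A x) (hB : ContinuousAt B x) :
    ContinuousAt (fun x => A x * B x) x := by
  have hc : Continuous fun q : Matrix (Fin l) (Fin m) ℝ × Matrix (Fin m) (Fin k) ℝ =>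
      q.1 * q.2 := Continuous.matrix_mul continuous_fst continuous_snd
  exact (hc.continuousAt).comp (hA.prodMk hB)

lemma Kbar_contAt {F : Matrix (Fin n) (Fin p) ℝ} (hF : Function.Injective F.mulVecLin)
    {R : Matrix (Fin n) (Fin n) ℝ} (hR : R.PosDef) :
    ContinuousAt (fun t : ℝ => Kbar F (R + t • 1)) 0 := by
  have hM : ContinuousAt (fun t : ℝ => R + t • (1 : Matrix (Fin n) (Fin n) ℝ)) 0 :=
    continuousAt_const.add (continuousAt_id.smul continuousAt_const)
  have hA : ContinuousAt (fun t : ℝ => (R + t • (1 : Matrix (Fin n) (Fin n) ℝ))⁻¹) 0 := by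
    have hinv : ContinuousAt Inv.inv (R + (0:ℝ) • (1 : Matrix (Fin n) (Fin n) ℝ)) := by
      have : ContinuousAt Inv.inv R :=
        continuousAt_matrix_inv R (by
          rw [Ring.inverse_eq_inv']
          exact continuousAt_inv₀ (ne_of_gt hR.det_pos))
      simpa using this
    exact ContinuousAt.comp (x := (0:ℝ)) hinv hM
  have hBc : ContinuousAt (fun t : ℝ =>
      Fᵀ * (R + t • (1 : Matrix (Fin n) (Fin n) ℝ))⁻¹ * F) 0 :=
    (ContinuousAt.matMul continuousAt_const hA).matMul continuousAt_const
  have hBinv : ContinuousAt (fun t : ℝ =>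
      (Fᵀ * (R + t • (1 : Matrix (Fin n) (Fin n) ℝ))⁻¹ * F)⁻¹) 0 := by
    have hB0 : (Fᵀ * R⁻¹ * F).PosDef := FAF_posDef hF hR.inv
    have hinv : ContinuousAt Inv.inv
        (Fᵀ * (R + (0:ℝ) • (1 : Matrix (Fin n) (Fin n) ℝ))⁻¹ * F) := by
      have : ContinuousAt Inv.inv (Fᵀ * R⁻¹ * F) :=
        continuousAt_matrix_inv _ (by
          rw [Ring.inverse_eq_inv']
          exact continuousAt_inv₀ (ne_of_gt hB0.det_pos))
      simpa using this
    exact ContinuousAt.comp (x := (0:ℝ)) hinv hBc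
  exact hA.sub ((((hA.matMul continuousAt_const).matMul hBinv).matMul
    continuousAt_const).matMul hA)

/-- Under Hypothesis H2, each standardized Leave-One-Out residual
`(K̄(σ²)y)ᵢ/√(K̄(σ²)ᵢᵢ)` for `K(σ²) = σ²R + σ_ε²Iₙ` tends to `0` as `σ² → +∞`. -/
theorem stmt7 (n p : ℕ) (hp : 0 < p) (hpn : p < n)
    (F : Matrix (Fin n) (Fin p) ℝ) (hF : F.rank = p)
    (hH2 : ∀ i : Fin n, Pi.single i (1 : ℝ) ∉ LinearMap.range (Matrix.mulVecLin F))
    (y : Fin n → ℝ) (R : Matrix (Fin n) (Fin n) ℝ) (hR : R.PosDef)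
    (sigeps2 : ℝ) (hsig : 0 ≤ sigeps2) :
    ∀ i : Fin n,
      Filter.Tendsto
        (fun s : ℝ =>
          (Kbar F (s • R + sigeps2 • 1) *ᵥ y) i /
            Real.sqrt (Kbar F (s • R + sigeps2 • 1) i i))
        Filter.atTop (nhds 0) := by
  intro i
  have hFinj := mulVecLin_inj hF
  set g : ℝ → Matrix (Fin n) (Fin n) ℝ := fun t => Kbar F (R + t • 1) with hg
  have hPD : ∀ t : ℝ, 0 ≤ t → (R + t • (1 : Matrix (Fin n) (Fin n) ℝ)).PosDef := by
    intro t ht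
    apply hR.add_posSemidef
    rw [Matrix.smul_one_eq_diagonal]
    exact Matrix.PosSemidef.diagonal (by intro j; exact ht)
  have hdpos : ∀ t : ℝ, 0 ≤ t → 0 < g t i i :=
    fun t ht => Kbar_diag_pos hFinj (hPD t ht) (hH2 i)
  have hgc : ContinuousAt g 0 := Kbar_contAt hFinj hR
  have hdc : ContinuousAt (fun t => g t i i) 0 := by
    exact (((continuous_apply i).comp (continuous_apply i)).continuousAt).comp hgc
  have hNc : ContinuousAt (fun t => (g t *ᵥ y) i) 0 := by
    have hc : Continuous fun M : Matrix (Fin n) (Fin n) ℝ => (M *ᵥ y) i :=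
      (continuous_apply i).comp (continuous_id.matrix_mulVec continuous_const)
    exact hc.continuousAt.comp hgc
  have hd0 : 0 < g 0 i i := hdpos 0 le_rfl
  have hratio : ContinuousAt (fun t => (g t *ᵥ y) i / Real.sqrt (g t i i)) 0 :=
    hNc.div (Real.continuous_sqrt.continuousAt.comp hdc)
      (ne_of_gt (Real.sqrt_pos.mpr hd0))
  have hts : Filter.Tendsto (fun s : ℝ => sigeps2 / s) Filter.atTop (nhds 0) := by
    simpa [div_eq_mul_inv] using
      (tendsto_const_nhds (x := sigeps2)).mul tendsto_inv_atTop_zero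
  have h2 : Filter.Tendsto
      (fun s : ℝ => (g (sigeps2 / s) *ᵥ y) i / Real.sqrt (g (sigeps2 / s) i i))
      Filter.atTop (nhds ((g 0 *ᵥ y) i / Real.sqrt (g 0 i i))) :=
    (hratio.tendsto).comp hts
  have h1 : Filter.Tendsto (fun s : ℝ => Real.sqrt (s⁻¹)) Filter.atTop (nhds 0) := by
    have h0 := (Real.continuous_sqrt.continuousAt (x := (0:ℝ))).tendsto.comp
      tendsto_inv_atTop_zero
    rw [Real.sqrt_zero] at h0
    exact h0
  have hmul := h1.mul h2
  rw [zero_mul] at hmul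
  refine Filter.Tendsto.congr' ?_ hmul
  filter_upwards [Filter.eventually_gt_atTop (0:ℝ)] with s hs
  have hs0 : s ≠ 0 := ne_of_gt hs
  have hmulc : s * (sigeps2 / s) = sigeps2 := by field_simp
  have hsplit : s • R + sigeps2 • (1 : Matrix (Fin n) (Fin n) ℝ)
      = s • (R + (sigeps2 / s) • 1) := by
    rw [smul_add, smul_smul, hmulc]
  have htnonneg : 0 ≤ sigeps2 / s := div_nonneg hsig hs.le
  have hsc : Kbar F (s • R + sigeps2 • 1) = s⁻¹ • g (sigeps2 / s) := by
    rw [hsplit]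
    exact Kbar_smul hFinj (hPD _ htnonneg) hs0
  have hdt : 0 < g (sigeps2 / s) i i := hdpos _ htnonneg
  have hsinv : (0:ℝ) ≤ s⁻¹ := inv_nonneg.mpr hs.le
  rw [hsc, Matrix.smul_mulVec]
  simp only [Matrix.smul_apply, Pi.smul_apply, smul_eq_mul]
  rw [Real.sqrt_mul hsinv]
  set a := Real.sqrt (s⁻¹) with ha
  set b := Real.sqrt (g (sigeps2 / s) i i) with hb
  have hss : a * a = s⁻¹ := Real.mul_self_sqrt hsinv
  have hapos : 0 < a := Real.sqrt_pos.mpr (inv_pos.mpr hs)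
  have hbpos : 0 < b := Real.sqrt_pos.mpr hdt
  rw [← hss]
  field_simp
end

section
/- (Coercivity of the optimal amplitude as the length-scale relaxation parameter grows.) Let (R_λ)_{λ>0} be a family of real symmetric positive definite n×n matrices such that R_λ converges entrywise to eeᵀ as λ → +∞, where e = (1,…,1)ᵀ. Assume e ∈ Im F (Hypothesis H1), Hypothesis H2, σ_ε² > 0, a ∈ (1/2, 1), q > 0, 0 < δ < q, and k_ε < na, where k_ε = Card{ i ∈ {1,…,n} : (Πy)ᵢ/√(Πᵢᵢ) ≤ σ_ε q }. If s : (0,∞) → [0,∞) is any function such that for every λ > 0 the quasi-Gaussian proportion equals a, i.e. (1/n)Σᵢ₌₁ⁿ h⁺_δ(q − (K̄_λ y)ᵢ/√((K̄_λ)ᵢᵢ)) = a where K̄_λ is the matrix K̄ associated with K = s(λ)R_λ + σ_ε²Iₙ, then s(λ) → +∞ as λ → +∞. -/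
open Matrix

/-- `h⁺_δ(x) = 1` if `x > δ`, `x/δ` if `0 < x ≤ δ`, `0` if `x ≤ 0`. -/
noncomputable def hplus (δ x : ℝ) : ℝ :=
  if δ < x then 1 else if 0 < x then x / δ else 0

section Aux
variable {n p : ℕ}

variable {n p : ℕ}

lemma vecMulVec_mul' {a b c : Type*} [Fintype b] [Fintype c] (u : a → ℝ) (v : b → ℝ) (M : Matrix b c ℝ) :
    vecMulVec u v * M = vecMulVec u (v ᵥ* M) := by
  ext i j
  simp [Matrix.mul_apply, vecMulVec_apply, vecMul, dotProduct, Finset.mul_sum, mul_assoc]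

lemma mul_vecMulVec' {a b c : Type*} [Fintype a] [Fintype b] (M : Matrix a b ℝ) (u : b → ℝ) (v : c → ℝ) :
    M * vecMulVec u v = vecMulVec (M *ᵥ u) v := by
  ext i j
  simp [Matrix.mul_apply, vecMulVec_apply, mulVec, dotProduct, Finset.sum_mul, mul_assoc]

lemma vecMulVec_mul_vecMulVec {a b c : Type*} [Fintype b] (u : a → ℝ) (v x : b → ℝ) (z : c → ℝ) :
    vecMulVec u v * vecMulVec x z = (v ⬝ᵥ x) • vecMulVec u z := by
  ext i j
  simp only [Matrix.mul_apply, vecMulVec_apply, Matrix.smul_apply, dotProduct,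
    Finset.sum_mul, Finset.mul_sum, smul_eq_mul]
  rw [Finset.sum_congr rfl]
  intro k _
  ring

section Algebra
variable (F : Matrix (Fin n) (Fin p) ℝ) (w : Fin p → ℝ)
  (hw : F *ᵥ w = fun _ => (1:ℝ))

-- the all-ones matrix
local notation "J" => (Matrix.of fun _ _ => (1:ℝ) : Matrix (Fin n) (Fin n) ℝ)
local notation "W" => vecMulVec w w
local notation "G" => Fᵀ * F

include hw

lemma J_eq : F * W * Fᵀ = J := by
  rw [mul_vecMulVec', vecMulVec_mul', vecMul_transpose, hw]
  ext i j; simp [vecMulVec_apply]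

omit hw in
lemma JJ : (J : Matrix (Fin n) (Fin n) ℝ) * J = (n:ℝ) • J := by
  ext i j; simp [Matrix.mul_apply]

lemma WGW : W * G * W = (n:ℝ) • W := by
  rw [vecMulVec_mul', _root_.vecMulVec_mul_vecMulVec]
  congr 1
  rw [← vecMul_vecMul, vecMul_transpose, hw, ← dotProduct_mulVec, hw]
  simp [dotProduct]

end Algebra

section Inverses
variable (F : Matrix (Fin n) (Fin p) ℝ) (w : Fin p → ℝ)
  (hw : F *ᵥ w = fun _ => (1:ℝ)) (σ2 c : ℝ) (hσ2 : 0 < σ2) (hc : 0 ≤ c)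

local notation "J" => (Matrix.of fun _ _ => (1:ℝ) : Matrix (Fin n) (Fin n) ℝ)
local notation "W" => vecMulVec w w
local notation "G" => Fᵀ * F

include hσ2 hc in
lemma Kstar_inv :
    (c • J + σ2 • (1 : Matrix (Fin n) (Fin n) ℝ)) *
      (σ2⁻¹ • ((1 : Matrix (Fin n) (Fin n) ℝ) - (c/(σ2 + n*c)) • J)) = 1 := by
  have hd : σ2 + n * c ≠ 0 := ne_of_gt (by positivity)
  have hJJ : (J : Matrix (Fin n) (Fin n) ℝ) * J = (n:ℝ) • J := by
    ext i j; simp [Matrix.mul_apply]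
  simp only [Matrix.mul_sub, Matrix.sub_mul, Matrix.add_mul, Matrix.mul_add,
    Matrix.smul_mul, Matrix.mul_smul, Matrix.mul_one, Matrix.one_mul, smul_smul, hJJ]
  match_scalars <;> field_simp <;> ring

include hσ2 hc in
lemma Kstar_inv_eq :
    (c • J + σ2 • (1 : Matrix (Fin n) (Fin n) ℝ))⁻¹
      = σ2⁻¹ • ((1 : Matrix (Fin n) (Fin n) ℝ) - (c/(σ2 + n*c)) • J) :=
  Matrix.inv_eq_right_inv (Kstar_inv σ2 c hσ2 hc)

include hw hσ2 hc in
lemma FKF_eq :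
    Fᵀ * (c • J + σ2 • (1 : Matrix (Fin n) (Fin n) ℝ))⁻¹ * F
      = σ2⁻¹ • (G - (c/(σ2 + n*c)) • (G * W * G)) := by
  rw [Kstar_inv_eq (n := n) σ2 c hσ2 hc, ← J_eq F w hw]
  simp only [Matrix.mul_smul, Matrix.smul_mul, Matrix.mul_sub, Matrix.sub_mul,
    Matrix.mul_one, Matrix.one_mul, smul_smul, smul_sub]
  simp only [Matrix.mul_assoc]

include hw hσ2 hc in
lemma Minv_right (hG : G * G⁻¹ = 1) :
    (Fᵀ * (c • J + σ2 • (1 : Matrix (Fin n) (Fin n) ℝ))⁻¹ * F) * (σ2 • G⁻¹ + c • W) = 1 := by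
  have hd : σ2 + (n:ℝ) * c ≠ 0 := ne_of_gt (by positivity)
  rw [FKF_eq F w hw σ2 c hσ2 hc]
  have h1 : (G * W * G) * G⁻¹ = G * W := by
    rw [Matrix.mul_assoc (G * W) G G⁻¹, hG, Matrix.mul_one]
  have h2 : (G * W * G) * W = (n:ℝ) • (G * W) := by
    rw [Matrix.mul_assoc G W G, Matrix.mul_assoc G (W * G) W,
      WGW F w hw, Matrix.mul_smul]
  simp only [Matrix.mul_add, Matrix.add_mul, Matrix.mul_sub, Matrix.sub_mul,
    Matrix.smul_mul, Matrix.mul_smul, smul_smul, smul_sub, smul_add, hG, h1, h2]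
  match_scalars <;> field_simp <;> ring

include hw hσ2 hc in
lemma Minv_eq (hG : G * G⁻¹ = 1) :
    (Fᵀ * (c • J + σ2 • (1 : Matrix (Fin n) (Fin n) ℝ))⁻¹ * F)⁻¹ = σ2 • G⁻¹ + c • W :=
  Matrix.inv_eq_right_inv (Minv_right F w hw σ2 c hσ2 hc hG)

include hw in
lemma JQ (hG : G * G⁻¹ = 1) : J * (F * G⁻¹ * Fᵀ) = J := by
  have haux : Fᵀ * (F * (G⁻¹ * Fᵀ)) = Fᵀ := by
    rw [← Matrix.mul_assoc Fᵀ F, ← Matrix.mul_assoc, hG, Matrix.one_mul]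
  conv_lhs => rw [← J_eq F w hw]
  simp only [Matrix.mul_assoc, haux]
  rw [← Matrix.mul_assoc, J_eq F w hw]

include hw in
lemma QJ (hG' : G⁻¹ * G = 1) : (F * G⁻¹ * Fᵀ) * J = J := by
  have haux : G⁻¹ * (Fᵀ * (F * (W * Fᵀ))) = W * Fᵀ := by
    rw [← Matrix.mul_assoc Fᵀ F, ← Matrix.mul_assoc, hG', Matrix.one_mul]
  conv_lhs => rw [← J_eq F w hw]
  simp only [Matrix.mul_assoc, haux]
  rw [← Matrix.mul_assoc, J_eq F w hw]

include hw hσ2 hc in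
lemma kbar_limit (hG : G * G⁻¹ = 1) (hG' : G⁻¹ * G = 1) :
    Kbar F (c • J + σ2 • (1 : Matrix (Fin n) (Fin n) ℝ))
      = σ2⁻¹ • ((1 : Matrix (Fin n) (Fin n) ℝ) - F * G⁻¹ * Fᵀ) := by
  have hd : σ2 + (n:ℝ) * c ≠ 0 := ne_of_gt (by positivity)
  have hσ : σ2 ≠ 0 := ne_of_gt hσ2
  have hJJ : (J : Matrix (Fin n) (Fin n) ℝ) * J = (n:ℝ) • J := by ext i j; simp [Matrix.mul_apply]
  rw [Kbar, Minv_eq F w hw σ2 c hσ2 hc hG, Kstar_inv_eq (n := n) σ2 c hσ2 hc]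
  rw [Matrix.mul_assoc _ F _, Matrix.mul_assoc _ (F * (σ2 • G⁻¹ + c • W)) Fᵀ]
  have hFMF : F * (σ2 • G⁻¹ + c • W) * Fᵀ = σ2 • (F * G⁻¹ * Fᵀ) + c • J := by
    simp only [Matrix.mul_add, Matrix.add_mul, Matrix.mul_smul, Matrix.smul_mul]
    rw [J_eq F w hw]
  rw [hFMF]
  simp only [Matrix.mul_add, Matrix.add_mul, Matrix.mul_sub, Matrix.sub_mul,
    Matrix.smul_mul, Matrix.mul_smul, Matrix.mul_one, Matrix.one_mul,
    smul_smul, smul_sub, smul_add, hJJ, JQ F w hw hG, QJ F w hw hG']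
  match_scalars <;> field_simp <;> ring

end Inverses

section Rank
variable {F : Matrix (Fin n) (Fin p) ℝ}

lemma mulVec_inj (hF : F.rank = p) : Function.Injective F.mulVecLin := by
  rw [← LinearMap.ker_eq_bot]
  have h := LinearMap.finrank_range_add_finrank_ker F.mulVecLin
  rw [Matrix.rank] at hF
  have : Module.finrank ℝ (LinearMap.ker F.mulVecLin) = 0 := by
    have hd : Module.finrank ℝ (Fin p → ℝ) = p := by simp
    omega
  exact Submodule.finrank_eq_zero.mp this

lemma detG_ne (hF : F.rank = p) : (Fᵀ * F).det ≠ 0 := by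
  rw [Ne, ← Matrix.exists_mulVec_eq_zero_iff]
  rintro ⟨v, hv, hGv⟩
  apply hv
  have h0 : v ⬝ᵥ ((Fᵀ * F) *ᵥ v) = 0 := by rw [hGv]; simp
  rw [← Matrix.mulVec_mulVec, Matrix.dotProduct_mulVec, Matrix.vecMul_transpose] at h0
  have hFv : F *ᵥ v = 0 := dotProduct_self_eq_zero.mp h0
  exact mulVec_inj hF (show F.mulVecLin v = F.mulVecLin 0 by simp [hFv])

lemma hGright (hF : F.rank = p) : (Fᵀ * F) * (Fᵀ * F)⁻¹ = 1 :=
  Matrix.mul_nonsing_inv _ (isUnit_iff_ne_zero.mpr (detG_ne hF))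

lemma hGleft (hF : F.rank = p) : (Fᵀ * F)⁻¹ * (Fᵀ * F) = 1 :=
  Matrix.nonsing_inv_mul _ (isUnit_iff_ne_zero.mpr (detG_ne hF))

end Rank

section Proj
variable {F : Matrix (Fin n) (Fin p) ℝ}

local notation "Q" => F * (Fᵀ * F)⁻¹ * Fᵀ
local notation "P" => (1 : Matrix (Fin n) (Fin n) ℝ) - F * (Fᵀ * F)⁻¹ * Fᵀ

lemma Pi_symm (hF : F.rank = p) : (P)ᵀ = P := by
  rw [Matrix.transpose_sub, Matrix.transpose_one, Matrix.transpose_mul, Matrix.transpose_mul,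
    Matrix.transpose_nonsing_inv, Matrix.transpose_mul, Matrix.transpose_transpose,
    Matrix.mul_assoc]

lemma Pi_idem (hF : F.rank = p) : P * P = P := by
  have haux : Fᵀ * (F * ((Fᵀ*F)⁻¹ * Fᵀ)) = Fᵀ := by
    rw [← Matrix.mul_assoc Fᵀ F, ← Matrix.mul_assoc, hGright hF, Matrix.one_mul]
  have hQQ : (Q) * Q = Q := by
    simp only [Matrix.mul_assoc, haux]
  simp only [Matrix.mul_sub, Matrix.sub_mul, Matrix.mul_one, Matrix.one_mul, hQQ]
  abel

lemma Pi_diag_pos (hF : F.rank = p)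
    (hH2 : ∀ i : Fin n, Pi.single i (1 : ℝ) ∉ LinearMap.range (Matrix.mulVecLin F))
    (i : Fin n) : 0 < (P) i i := by
  have hsum : (P) i i = ∑ j, ((P) i j)^2 := by
    conv_lhs => rw [← Pi_idem hF]
    rw [Matrix.mul_apply]
    congr 1; ext j
    have : (P) j i = (P) i j := by
      conv_lhs => rw [← Pi_symm hF]
      simp
    rw [this]; ring
  have hnn : 0 ≤ (P) i i := by rw [hsum]; positivity
  rcases hnn.lt_or_eq with h | h
  · exact h
  exfalso
  have hz : ∀ j, (P) i j = 0 := by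
    intro j
    have := (Finset.sum_eq_zero_iff_of_nonneg (fun j _ => sq_nonneg ((P) i j))).mp
      (by rw [← hsum, ← h]) j (Finset.mem_univ j)
    exact pow_eq_zero_iff (by norm_num) |>.mp this
  apply hH2 i
  refine ⟨((Fᵀ*F)⁻¹ * Fᵀ) *ᵥ Pi.single i 1, ?_⟩
  have hPv : (P) *ᵥ Pi.single i 1 = 0 := by
    ext j
    have hji : (P) j i = 0 := by
      have : (P) j i = (P) i j := by
        conv_lhs => rw [← Pi_symm hF]
        simp
      rw [this, hz j]
    simp [Matrix.mulVec_single, hji]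
  rw [Matrix.sub_mulVec, Matrix.one_mulVec, sub_eq_zero] at hPv
  rw [Matrix.mulVecLin_apply, Matrix.mulVec_mulVec, ← Matrix.mul_assoc, ← hPv]

end Proj

section Hplus
variable {δ : ℝ} (hδ : 0 < δ)

include hδ in
lemma hplus_eq (x : ℝ) : hplus δ x = max 0 (min 1 (x/δ)) := by
  rw [hplus]
  rcases lt_or_ge δ x with h | h
  · rw [if_pos h]
    have h1 : (1:ℝ) ≤ x/δ := (le_div_iff₀ hδ).mpr (by linarith)
    rw [min_eq_left h1, max_eq_right zero_le_one]
  · rw [if_neg (not_lt.mpr h)]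
    rcases lt_or_ge 0 x with h2 | h2
    · rw [if_pos h2]
      have hle : x/δ ≤ 1 := (div_le_one hδ).mpr h
      have hge : 0 ≤ x/δ := by positivity
      rw [min_eq_right hle, max_eq_right hge]
    · rw [if_neg (not_lt.mpr h2)]
      have : x/δ ≤ 0 := div_nonpos_of_nonpos_of_nonneg h2 hδ.le
      rw [min_eq_right (this.trans zero_le_one), max_eq_left this]

include hδ in
lemma hplus_cont : Continuous (hplus δ) := by
  have : (hplus δ) = fun x => max 0 (min 1 (x/δ)) := funext fun x => hplus_eq hδ x
  rw [this]
  fun_prop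

include hδ in
lemma hplus_le_one (x : ℝ) : hplus δ x ≤ 1 := by
  rw [hplus_eq hδ]
  simp [max_le_iff, min_le_iff]

include hδ in
lemma hplus_nonpos (x : ℝ) (hx : x ≤ 0) : hplus δ x = 0 := by
  rw [hplus, if_neg (by linarith : ¬ δ < x), if_neg (not_lt.mpr hx)]
end Hplus

lemma matrix_tendsto_iff {a b : Type*} {f : ℕ → Matrix a b ℝ} {A : Matrix a b ℝ} :
    Filter.Tendsto f Filter.atTop (nhds A) ↔
      ∀ i j, Filter.Tendsto (fun k => f k i j) Filter.atTop (nhds (A i j)) := by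
  refine tendsto_pi_nhds.trans ?_
  constructor
  · intro h i j
    exact (tendsto_pi_nhds.mp (h i)) j
  · intro h i
    exact tendsto_pi_nhds.mpr (h i)

lemma matrix_inv_tendsto {L : Matrix (Fin n) (Fin n) ℝ} (hL : L.det ≠ 0)
    {f : ℕ → Matrix (Fin n) (Fin n) ℝ} (hf : Filter.Tendsto f Filter.atTop (nhds L)) :
    Filter.Tendsto (fun k => (f k)⁻¹) Filter.atTop (nhds L⁻¹) := by
  have h1 : Filter.Tendsto (fun k => (f k).det) Filter.atTop (nhds L.det) :=
    ((continuous_id.matrix_det).tendsto L).comp hf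
  have h2 := h1.inv₀ hL
  have h3 : Filter.Tendsto (fun k => (f k).adjugate) Filter.atTop (nhds L.adjugate) :=
    ((continuous_id.matrix_adjugate).tendsto L).comp hf
  have h4 := h2.smul h3
  simp only [Matrix.inv_def, Ring.inverse_eq_inv']
  exact h4

lemma matrix_mul_tendsto {a b c : Type*} [Fintype b] {A : Matrix a b ℝ} {B : Matrix b c ℝ}
    {f : ℕ → Matrix a b ℝ} {g : ℕ → Matrix b c ℝ}
    (hf : Filter.Tendsto f Filter.atTop (nhds A))
    (hg : Filter.Tendsto g Filter.atTop (nhds B)) :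
    Filter.Tendsto (fun k => f k * g k) Filter.atTop (nhds (A * B)) :=
  by
  rw [matrix_tendsto_iff] at hf hg ⊢
  intro i j
  simp only [Matrix.mul_apply]
  exact tendsto_finset_sum _ fun l _ => (hf i l).mul (hg l j)

end Aux


/-- Coercivity of the optimal amplitude: if `R_λ → eeᵀ` entrywise as
`λ → ∞` and `s(λ)` matches the quasi-Gaussian proportion `a` for every
`λ > 0`, then `s(λ) → +∞`. -/
theorem stmt15 (n p : ℕ) (hp : 0 < p) (hpn : p < n)
    (F : Matrix (Fin n) (Fin p) ℝ) (hF : F.rank = p)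
    (R : ℝ → Matrix (Fin n) (Fin n) ℝ)
    (hRpd : ∀ l : ℝ, 0 < l → (R l).PosDef)
    (hRlim : ∀ i j : Fin n, Filter.Tendsto (fun l : ℝ => R l i j) Filter.atTop (nhds 1))
    (hH1 : (fun _ => (1 : ℝ) : Fin n → ℝ) ∈ LinearMap.range (Matrix.mulVecLin F))
    (hH2 : ∀ i : Fin n, Pi.single i (1 : ℝ) ∉ LinearMap.range (Matrix.mulVecLin F))
    (y : Fin n → ℝ) (sigeps : ℝ) (hsig : 0 < sigeps)
    (a : ℝ) (ha : a ∈ Set.Ioo (1 / 2 : ℝ) 1)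
    (q : ℝ) (hq : 0 < q) (δ : ℝ) (hδ : 0 < δ) (hδq : δ < q)
    (hke : ((Finset.univ.filter fun i : Fin n =>
        (((1 : Matrix (Fin n) (Fin n) ℝ) - F * (Fᵀ * F)⁻¹ * Fᵀ) *ᵥ y) i /
          Real.sqrt (((1 : Matrix (Fin n) (Fin n) ℝ) - F * (Fᵀ * F)⁻¹ * Fᵀ) i i)
          ≤ sigeps * q).card : ℝ) < n * a)
    (s : ℝ → ℝ) (hs0 : ∀ l : ℝ, 0 < l → 0 ≤ s l)
    (hsa : ∀ l : ℝ, 0 < l →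
      (1 / n : ℝ) * ∑ i, hplus δ
        (q - (Kbar F (s l • R l + (sigeps ^ 2) • (1 : Matrix (Fin n) (Fin n) ℝ)) *ᵥ y) i /
          Real.sqrt (Kbar F (s l • R l + (sigeps ^ 2) • (1 : Matrix (Fin n) (Fin n) ℝ)) i i))
        = a) :
    Filter.Tendsto s Filter.atTop Filter.atTop := by
  classical
  have hσ2 : (0:ℝ) < sigeps ^ 2 := by positivity
  obtain ⟨w, hw0⟩ := hH1
  have hw : F *ᵥ w = fun _ => (1:ℝ) := by rw [← Matrix.mulVecLin_apply]; exact hw0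
  have hG : (Fᵀ * F) * (Fᵀ * F)⁻¹ = 1 := hGright hF
  have hG' : (Fᵀ * F)⁻¹ * (Fᵀ * F) = 1 := hGleft hF
  have hn : 0 < n := lt_trans hp hpn
  have hnR : (0:ℝ) < n := by exact_mod_cast hn
  by_contra hns
  -- extract a bounded subsequence
  have hnot : ¬ ∀ M : ℝ, ∀ᶠ l in Filter.atTop, M ≤ s l :=
    fun h => hns (Filter.tendsto_atTop.mpr h)
  push_neg at hnot
  obtain ⟨M, hM⟩ := hnot
  replace hM : ∃ᶠ l in Filter.atTop, ¬ M ≤ s l := hM.mono fun _ h => not_le.mpr h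
  have hfreq : ∀ b : ℝ, ∃ l ≥ b, s l < M := by
    intro b
    obtain ⟨l, hl, h⟩ := Filter.frequently_atTop.mp hM b
    exact ⟨l, hl, not_le.mp h⟩
  choose u hu1 hu2 using fun k : ℕ => hfreq ((k:ℝ)+1)
  have hupos : ∀ k, 0 < u k := fun k => lt_of_lt_of_le (by positivity) (hu1 k)
  have hsmem : ∀ k, s (u k) ∈ Set.Icc (0:ℝ) M := fun k => ⟨hs0 _ (hupos k), (hu2 k).le⟩
  obtain ⟨sstar, hsstarmem, φ, hφ, hconv⟩ :=
    tendsto_subseq_of_bounded (Metric.isBounded_Icc 0 M) hsmem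
  rw [isClosed_Icc.closure_eq] at hsstarmem
  have hsstar : 0 ≤ sstar := hsstarmem.1
  set v : ℕ → ℝ := fun k => u (φ k) with hvdef
  have hvpos : ∀ k, 0 < v k := fun k => hupos (φ k)
  have hv : Filter.Tendsto v Filter.atTop Filter.atTop := by
    apply Filter.tendsto_atTop_mono (fun k => ?_) tendsto_natCast_atTop_atTop
    calc (k:ℝ) ≤ (φ k : ℝ) := by exact_mod_cast hφ.le_apply
      _ ≤ (φ k : ℝ) + 1 := by linarith
      _ ≤ u (φ k) := hu1 (φ k)
  have hst : Filter.Tendsto (fun k => s (v k)) Filter.atTop (nhds sstar) := hconv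
  -- limit matrices
  set Kk : ℕ → Matrix (Fin n) (Fin n) ℝ :=
    fun k => s (v k) • R (v k) + (sigeps ^ 2) • (1 : Matrix (Fin n) (Fin n) ℝ) with hKkdef
  set Kstar : Matrix (Fin n) (Fin n) ℝ :=
    sstar • (Matrix.of fun _ _ => (1:ℝ)) + (sigeps ^ 2) • (1 : Matrix (Fin n) (Fin n) ℝ)
    with hKstardef
  have T_K : Filter.Tendsto Kk Filter.atTop (nhds Kstar) := by
    rw [matrix_tendsto_iff]
    intro i j
    simp only [hKkdef, hKstardef, Matrix.add_apply, Matrix.smul_apply, smul_eq_mul,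
      Matrix.of_apply]
    exact (hst.mul ((hRlim i j).comp hv)).add tendsto_const_nhds
  have hdetK : Kstar.det ≠ 0 :=
    Matrix.det_ne_zero_of_right_inverse (Kstar_inv (n := n) (sigeps ^ 2) sstar hσ2 hsstar)
  have hdetM : (Fᵀ * Kstar⁻¹ * F).det ≠ 0 :=
    Matrix.det_ne_zero_of_right_inverse (Minv_right F w hw (sigeps ^ 2) sstar hσ2 hsstar hG)
  have T_inv : Filter.Tendsto (fun k => (Kk k)⁻¹) Filter.atTop (nhds Kstar⁻¹) :=
    matrix_inv_tendsto hdetK T_K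
  have T_FKF : Filter.Tendsto (fun k => Fᵀ * (Kk k)⁻¹ * F) Filter.atTop
      (nhds (Fᵀ * Kstar⁻¹ * F)) :=
    matrix_mul_tendsto (matrix_mul_tendsto tendsto_const_nhds T_inv) tendsto_const_nhds
  have T_Minv : Filter.Tendsto (fun k => (Fᵀ * (Kk k)⁻¹ * F)⁻¹) Filter.atTop
      (nhds ((Fᵀ * Kstar⁻¹ * F)⁻¹)) := matrix_inv_tendsto hdetM T_FKF
  have T_Kbar : Filter.Tendsto (fun k => Kbar F (Kk k)) Filter.atTop
      (nhds (Kbar F Kstar)) := by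
    simp only [Kbar]
    exact T_inv.sub (matrix_mul_tendsto (matrix_mul_tendsto (matrix_mul_tendsto
      (matrix_mul_tendsto T_inv tendsto_const_nhds) T_Minv) tendsto_const_nhds) T_inv)
  have hentry : ∀ i j, Filter.Tendsto (fun k => Kbar F (Kk k) i j) Filter.atTop
      (nhds (Kbar F Kstar i j)) := matrix_tendsto_iff.mp T_Kbar
  -- the limit matrix is σ2⁻¹ • Π
  have hKB : Kbar F Kstar = (sigeps ^ 2)⁻¹ •
      ((1 : Matrix (Fin n) (Fin n) ℝ) - F * (Fᵀ * F)⁻¹ * Fᵀ) :=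
    kbar_limit F w hw (sigeps ^ 2) sstar hσ2 hsstar hG hG'
  have hPpos : ∀ i, 0 < ((1 : Matrix (Fin n) (Fin n) ℝ) - F * (Fᵀ * F)⁻¹ * Fᵀ) i i :=
    Pi_diag_pos hF hH2
  have hKBpos : ∀ i, 0 < Kbar F Kstar i i := by
    intro i
    rw [hKB]
    simp only [Matrix.smul_apply, smul_eq_mul]
    exact mul_pos (by positivity) (hPpos i)
  set L : Fin n → ℝ :=
    fun i => (Kbar F Kstar *ᵥ y) i / Real.sqrt (Kbar F Kstar i i) with hLdef
  have T_E : ∀ i, Filter.Tendsto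
      (fun k => q - (Kbar F (Kk k) *ᵥ y) i / Real.sqrt (Kbar F (Kk k) i i))
      Filter.atTop (nhds (q - L i)) := by
    intro i
    have hnum : Filter.Tendsto (fun k => (Kbar F (Kk k) *ᵥ y) i) Filter.atTop
        (nhds ((Kbar F Kstar *ᵥ y) i)) := by
      simp only [Matrix.mulVec, dotProduct]
      exact tendsto_finset_sum _ fun j _ => (hentry i j).mul tendsto_const_nhds
    have hden : Filter.Tendsto (fun k => Real.sqrt (Kbar F (Kk k) i i)) Filter.atTop
        (nhds (Real.sqrt (Kbar F Kstar i i))) :=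
      (Real.continuous_sqrt.tendsto _).comp (hentry i i)
    have hdnz : Real.sqrt (Kbar F Kstar i i) ≠ 0 :=
      ne_of_gt (Real.sqrt_pos.mpr (hKBpos i))
    exact tendsto_const_nhds.sub (hnum.div hden hdnz)
  have T_sum : Filter.Tendsto
      (fun k => (1 / n : ℝ) * ∑ i, hplus δ
        (q - (Kbar F (Kk k) *ᵥ y) i / Real.sqrt (Kbar F (Kk k) i i)))
      Filter.atTop (nhds ((1 / n : ℝ) * ∑ i, hplus δ (q - L i))) :=
    tendsto_const_nhds.mul (tendsto_finset_sum _ fun i _ =>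
      ((hplus_cont hδ).tendsto _).comp (T_E i))
  have hconst : ∀ k, (1 / n : ℝ) * ∑ i, hplus δ
      (q - (Kbar F (Kk k) *ᵥ y) i / Real.sqrt (Kbar F (Kk k) i i)) = a :=
    fun k => hsa (v k) (hvpos k)
  have ha_eq : a = (1 / n : ℝ) * ∑ i, hplus δ (q - L i) := by
    refine tendsto_nhds_unique ?_ T_sum
    simp only [hconst]
    exact tendsto_const_nhds
  -- final bound
  set S := Finset.univ.filter fun i : Fin n =>
      (((1 : Matrix (Fin n) (Fin n) ℝ) - F * (Fᵀ * F)⁻¹ * Fᵀ) *ᵥ y) i /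
        Real.sqrt (((1 : Matrix (Fin n) (Fin n) ℝ) - F * (Fᵀ * F)⁻¹ * Fᵀ) i i)
        ≤ sigeps * q with hSdef
  have hLi : ∀ i, L i =
      ((((1 : Matrix (Fin n) (Fin n) ℝ) - F * (Fᵀ * F)⁻¹ * Fᵀ) *ᵥ y) i /
        Real.sqrt (((1 : Matrix (Fin n) (Fin n) ℝ) - F * (Fᵀ * F)⁻¹ * Fᵀ) i i)) / sigeps := by
    intro i
    rw [hLdef]
    simp only [hKB, Matrix.smul_mulVec, Pi.smul_apply, Matrix.smul_apply, smul_eq_mul]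
    rw [Real.sqrt_mul (by positivity), Real.sqrt_inv, Real.sqrt_sq hsig.le]
    have hsq : Real.sqrt (((1 : Matrix (Fin n) (Fin n) ℝ) - F * (Fᵀ * F)⁻¹ * Fᵀ) i i) ≠ 0 :=
      ne_of_gt (Real.sqrt_pos.mpr (hPpos i))
    have hse : sigeps ≠ 0 := ne_of_gt hsig
    have key : ∀ z r : ℝ, r ≠ 0 → (sigeps^2)⁻¹ * z / (sigeps⁻¹ * r) = z/r/sigeps := by
      intro z r hr
      field_simp
    exact key _ _ hsq
  have hbound : ∑ i, hplus δ (q - L i) ≤ (S.card : ℝ) := by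
    have h1 : ∀ i ∈ Finset.univ, hplus δ (q - L i) ≤ (if i ∈ S then (1:ℝ) else 0) := by
      intro i _
      by_cases hiS : i ∈ S
      · rw [if_pos hiS]
        exact hplus_le_one hδ _
      · rw [if_neg hiS]
        have hcond : ¬ ((((1 : Matrix (Fin n) (Fin n) ℝ) - F * (Fᵀ * F)⁻¹ * Fᵀ) *ᵥ y) i /
            Real.sqrt (((1 : Matrix (Fin n) (Fin n) ℝ) - F * (Fᵀ * F)⁻¹ * Fᵀ) i i)
            ≤ sigeps * q) := by
          intro hcon
          exact hiS (Finset.mem_filter.mpr ⟨Finset.mem_univ i, hcon⟩)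
        push_neg at hcond
        have hLq : q < L i := by
          rw [hLi i, lt_div_iff₀ hsig]
          linarith [hcond]
        have : q - L i ≤ 0 := by linarith
        rw [hplus_nonpos hδ _ this]
    calc ∑ i, hplus δ (q - L i) ≤ ∑ i : Fin n, (if i ∈ S then (1:ℝ) else 0) :=
          Finset.sum_le_sum h1
      _ = (S.card : ℝ) := by
          rw [Finset.sum_ite_mem, Finset.univ_inter, Finset.sum_const, nsmul_eq_mul, mul_one]
  have : a < a := by
    calc a = (1 / n : ℝ) * ∑ i, hplus δ (q - L i) := ha_eq
      _ ≤ (1 / n : ℝ) * (S.card : ℝ) := by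
          apply mul_le_mul_of_nonneg_left hbound (by positivity)
      _ < (1 / n : ℝ) * ((n : ℝ) * a) := by
          apply mul_lt_mul_of_pos_left ?_ (by positivity)
          exact hke
      _ = a := by field_simp
  exact lt_irrefl a this
end

section
/- Let W be a real n×(n−p) matrix with WᵀW = I_{n−p} and FᵀW = 0, and let D₁ be a real symmetric n×n matrix such that WᵀD₁W is positive definite. Set A = W(WᵀD₁W)⁻¹Wᵀ. Then A is symmetric positive semidefinite with Ker A = Im F, and under Hypothesis H2 every diagonal entry of A is strictly positive: Aᵢᵢ > 0 for all i = 1,…,n. -/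
open Matrix

/-- Lemma 7 (and surroundings): `A = W(WᵀD₁W)⁻¹Wᵀ` is symmetric positive
semidefinite with `Ker A = Im F`, and under Hypothesis H2 all its diagonal
entries are strictly positive. -/
theorem stmt17 (n p : ℕ) (hp : 0 < p) (hpn : p < n)
    (F : Matrix (Fin n) (Fin p) ℝ) (hF : F.rank = p)
    (W : Matrix (Fin n) (Fin (n - p)) ℝ)
    (hW1 : Wᵀ * W = 1) (hW2 : Fᵀ * W = 0)
    (D1 : Matrix (Fin n) (Fin n) ℝ) (hD1 : D1.IsSymm)
    (hPD : (Wᵀ * D1 * W).PosDef)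
    (hH2 : ∀ i : Fin n, Pi.single i (1 : ℝ) ∉ LinearMap.range (Matrix.mulVecLin F)) :
    (W * (Wᵀ * D1 * W)⁻¹ * Wᵀ).PosSemidef ∧
    LinearMap.ker (Matrix.mulVecLin (W * (Wᵀ * D1 * W)⁻¹ * Wᵀ))
      = LinearMap.range (Matrix.mulVecLin F) ∧
    ∀ i : Fin n, 0 < (W * (Wᵀ * D1 * W)⁻¹ * Wᵀ) i i := by
  set M := Wᵀ * D1 * W with hM
  have hMinv : M⁻¹.PosDef := hPD.inv
  -- PosSemidef
  have hPS : (W * M⁻¹ * Wᵀ).PosSemidef := by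
    have := hMinv.posSemidef.mul_mul_conjTranspose_same W
    rwa [conjTranspose_eq_transpose_of_trivial] at this
  -- quadratic form identity
  have hquad : ∀ x : Fin n → ℝ,
      x ⬝ᵥ (W * M⁻¹ * Wᵀ) *ᵥ x = (Wᵀ *ᵥ x) ⬝ᵥ M⁻¹ *ᵥ (Wᵀ *ᵥ x) := by
    intro x
    rw [← mulVec_mulVec, ← mulVec_mulVec, dotProduct_mulVec, ← mulVec_transpose]
  -- W injective ⇒ rank W = n - p
  have hWinj : Function.Injective (mulVecLin W) := by
    have h2 : ∀ z, Wᵀ *ᵥ (W *ᵥ z) = z := by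
      intro z; rw [mulVec_mulVec, hW1, one_mulVec]
    intro x y hxy
    simp only [mulVecLin_apply] at hxy
    rw [← h2 x, ← h2 y, hxy]
  have hrankW : Wᵀ.rank = n - p := by
    rw [Matrix.rank_transpose]
    have : LinearMap.range (mulVecLin W) ≃ₗ[ℝ] (Fin (n-p) → ℝ) :=
      (LinearEquiv.ofInjective _ hWinj).symm
    simpa [Matrix.rank] using this.finrank_eq.trans (by simp)
  -- finrank of ker Wᵀ = p
  have hkerWT : Module.finrank ℝ (LinearMap.ker (mulVecLin Wᵀ)) = p := by
    have h := LinearMap.finrank_range_add_finrank_ker (mulVecLin Wᵀ)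
    rw [show Module.finrank ℝ (LinearMap.range (mulVecLin Wᵀ)) = Wᵀ.rank from rfl] at h
    simp only [Module.finrank_fintype_fun_eq_card, Fintype.card_fin] at h
    omega
  -- range F ≤ ker Wᵀ
  have hWTF : Wᵀ * F = 0 := by
    have := congrArg Matrix.transpose hW2
    rwa [transpose_mul, transpose_zero] at this
  have hle : LinearMap.range (mulVecLin F) ≤ LinearMap.ker (mulVecLin Wᵀ) := by
    rintro x ⟨y, rfl⟩
    simp only [LinearMap.mem_ker, mulVecLin_apply, mulVec_mulVec, ← hWTF]
    rw [← mulVec_mulVec]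
    simp [hWTF]
  have hkerEqRange : LinearMap.ker (mulVecLin Wᵀ) = LinearMap.range (mulVecLin F) := by
    refine (Submodule.eq_of_le_of_finrank_le hle ?_).symm
    rw [hkerWT, show Module.finrank ℝ (LinearMap.range (mulVecLin F)) = F.rank from rfl, hF]
  -- ker A = ker Wᵀ
  have hkerA : LinearMap.ker (mulVecLin (W * M⁻¹ * Wᵀ)) = LinearMap.ker (mulVecLin Wᵀ) := by
    ext x
    simp only [LinearMap.mem_ker, mulVecLin_apply]
    constructor
    · intro hx
      by_contra hne
      have hpos := hMinv.dotProduct_mulVec_pos (x := Wᵀ *ᵥ x) hne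
      simp only [star_trivial] at hpos
      rw [← hquad x, hx] at hpos
      simp at hpos
    · intro hx
      rw [← mulVec_mulVec, ← mulVec_mulVec, hx]
      simp
  refine ⟨hPS, hkerA.trans hkerEqRange, ?_⟩
  intro i
  have hi : Pi.single i (1:ℝ) ∉ LinearMap.ker (mulVecLin Wᵀ) := by
    rw [hkerEqRange]; exact hH2 i
  have hne : Wᵀ *ᵥ Pi.single i 1 ≠ 0 := by
    simpa [LinearMap.mem_ker, mulVecLin_apply] using hi
  have hpos := hMinv.dotProduct_mulVec_pos (x := Wᵀ *ᵥ Pi.single i 1) hne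
  simp only [star_trivial] at hpos
  rw [← hquad (Pi.single i 1)] at hpos
  simpa [dotProduct, mulVec_single, Pi.single_apply, Finset.sum_ite_eq] using hpos
end
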